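/- Let n, N be positive integers and θ ∈ (0,1) with n²/(N+1)² ≤ θ. Then the product ∏_{k=N+1}^∞ (1 − n²/k²) converges (is multipliable), each factor lies in (0,1), and |ln ∏_{k=N+1}^∞ (1 − n²/k²)| ≤ n² · (|ln(1−θ)|/θ) · (π²/6 − ∑_{k=1}^N 1/k²). -/

import Mathlib

set_option maxHeartbeats 1000000 in
theorem stmt_2 (n N : ℕ) (hn : 0 < n) (hN : 0 < N) (θ : ℝ) (hθ : θ ∈ Set.Ioo (0:ℝ) 1)
    (h : (n : ℝ) ^ 2 / ((N : ℝ) + 1) ^ 2 ≤ θ) :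
    Multipliable (fun k : ℕ => 1 - (n : ℝ) ^ 2 / ((k : ℝ) + N + 1) ^ 2) ∧
    (∀ k : ℕ, (1 - (n : ℝ) ^ 2 / ((k : ℝ) + N + 1) ^ 2) ∈ Set.Ioo (0:ℝ) 1) ∧
    |Real.log (∏' k : ℕ, (1 - (n : ℝ) ^ 2 / ((k : ℝ) + N + 1) ^ 2))| ≤
      (n : ℝ) ^ 2 * (|Real.log (1 - θ)| / θ) *
        (Real.pi ^ 2 / 6 - ∑ k ∈ Finset.Icc 1 N, 1 / (k : ℝ) ^ 2) := by
  obtain ⟨hθ0, hθ1⟩ := hθ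
  set a : ℕ → ℝ := fun k => (n : ℝ) ^ 2 / ((k : ℝ) + N + 1) ^ 2 with ha_def
  have hn' : (0:ℝ) < (n:ℝ) := by exact_mod_cast hn
  have hden : ∀ k : ℕ, (0:ℝ) < ((k:ℝ) + N + 1) ^ 2 := fun k => by positivity
  have ha_pos : ∀ k : ℕ, 0 < a k := fun k => div_pos (by positivity) (hden k)
  have haθ : ∀ k : ℕ, a k ≤ θ := by
    intro k
    refine le_trans ?_ h
    apply div_le_div_of_nonneg_left (by positivity) (by positivity)
    nlinarith [Nat.cast_nonneg (α := ℝ) k, Nat.cast_nonneg (α := ℝ) N]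
  have hmem : ∀ k : ℕ, (1 - a k) ∈ Set.Ioo (0:ℝ) 1 :=
    fun k => ⟨by linarith [haθ k], by linarith [ha_pos k]⟩
  have hpos : ∀ k : ℕ, (0:ℝ) < 1 - a k := fun k => (hmem k).1
  -- summability of a
  have hbase : Summable (fun i : ℕ => 1 / (i : ℝ) ^ 2) :=
    Real.summable_one_div_nat_pow.mpr one_lt_two
  have hshift : Summable (fun k : ℕ => 1 / (((k + (N + 1) : ℕ)) : ℝ) ^ 2) :=
    (summable_nat_add_iff (N + 1)).mpr hbase
  have hsum : Summable a := by
    refine (hshift.mul_left ((n:ℝ)^2)).congr fun k => ?_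
    push_cast
    rw [ha_def]
    ring
  -- log bound
  set C : ℝ := |Real.log (1 - θ)| / θ with hC_def
  have hC_nonneg : 0 ≤ C := div_nonneg (abs_nonneg _) hθ0.le
  have hbound : ∀ k : ℕ, |Real.log (1 - a k)| ≤ C * a k := by
    intro k
    have hak := ha_pos k
    have hakθ := haθ k
    have hp1 : (0:ℝ) ≤ a k / θ := by positivity
    have hp2 : a k / θ ≤ 1 := by rw [div_le_one hθ0]; exact hakθ
    have hber := rpow_one_add_le_one_add_mul_self (s := -θ) (by linarith) hp1 hp2
    have h1θ : (0:ℝ) < 1 - θ := by linarith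
    have hxy : (1 + -θ : ℝ) ^ (a k / θ : ℝ) ≤ 1 - a k := by
      have : 1 + a k / θ * (-θ) = 1 - a k := by field_simp; ring
      linarith [hber, this.le, this.ge]
    have hlog : (a k / θ) * Real.log (1 - θ) ≤ Real.log (1 - a k) := by
      have := Real.log_le_log (by positivity) hxy
      rwa [show (1 + -θ : ℝ) = 1 - θ by ring, Real.log_rpow h1θ] at this
    have hlog1 : Real.log (1 - a k) ≤ 0 := Real.log_nonpos (by linarith) (by linarith)
    have hlog2 : Real.log (1 - θ) ≤ 0 := Real.log_nonpos (by linarith) (by linarith)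
    rw [abs_of_nonpos hlog1, hC_def, abs_of_nonpos hlog2]
    rw [div_mul_eq_mul_div, le_div_iff₀ hθ0]
    rw [div_mul_eq_mul_div, div_le_iff₀ hθ0] at hlog
    linarith
  have habs_sum : Summable (fun k => |Real.log (1 - a k)|) :=
    Summable.of_nonneg_of_le (fun k => abs_nonneg _) hbound (hsum.mul_left C)
  have hlog_sum : Summable (fun k => Real.log (1 - a k)) := habs_sum.of_abs
  -- multipliable
  have hmult : Multipliable (fun k : ℕ => 1 - a k) :=
    Real.multipliable_of_summable_log (f := fun k => 1 - a k) hpos hlog_sum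
  refine ⟨hmult, hmem, ?_⟩
  -- log of the product
  have hexp := Real.rexp_tsum_eq_tprod (f := fun k => 1 - a k) hpos hlog_sum
  have hlogprod : Real.log (∏' k : ℕ, (1 - a k)) = ∑' k : ℕ, Real.log (1 - a k) := by
    have h0 := hexp
    rw [← h0, Real.log_exp]
  -- the tail sum
  have hbasel := hasSum_zeta_two
  have hkey := Summable.sum_add_tsum_nat_add (f := fun i : ℕ => 1 / (i : ℝ) ^ 2) (N + 1) hbase
  rw [hbasel.tsum_eq] at hkey
  have hrange : ∑ i ∈ Finset.range (N + 1), (1:ℝ) / (i : ℝ) ^ 2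
      = ∑ k ∈ Finset.Icc 1 N, 1 / (k : ℝ) ^ 2 := by
    rw [Finset.sum_range_succ',
      show Finset.Icc 1 N = Finset.Ico 1 (N+1) from (Finset.Ico_add_one_right_eq_Icc 1 N).symm,
      Finset.sum_Ico_eq_sum_range]
    simp only [Nat.add_sub_cancel, Nat.cast_zero]
    norm_num
    exact Finset.sum_congr rfl fun i _ => by ring_nf
  have hT : ∑' k : ℕ, 1 / (((k + (N + 1) : ℕ)) : ℝ) ^ 2
      = Real.pi ^ 2 / 6 - ∑ k ∈ Finset.Icc 1 N, 1 / (k : ℝ) ^ 2 := by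
    rw [← hrange]; linarith [hkey]
  have hsuma : ∑' k, a k
      = (n:ℝ)^2 * (Real.pi ^ 2 / 6 - ∑ k ∈ Finset.Icc 1 N, 1 / (k : ℝ) ^ 2) := by
    rw [← hT, ← tsum_mul_left]
    apply tsum_congr
    intro k
    push_cast
    rw [ha_def]
    ring
  calc |Real.log (∏' k : ℕ, (1 - a k))| = |∑' k : ℕ, Real.log (1 - a k)| := by rw [hlogprod]
    _ ≤ ∑' k : ℕ, |Real.log (1 - a k)| := by
        simpa using norm_tsum_le_tsum_norm (f := fun k => Real.log (1 - a k)) (by simpa using habs_sum)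
    _ ≤ ∑' k : ℕ, C * a k := Summable.tsum_le_tsum hbound habs_sum (hsum.mul_left C)
    _ = C * ∑' k, a k := tsum_mul_left
    _ = (n : ℝ) ^ 2 * C * (Real.pi ^ 2 / 6 - ∑ k ∈ Finset.Icc 1 N, 1 / (k : ℝ) ^ 2) := by
        rw [hsuma]; ring
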